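/- For every integer d ≥ 0 and every configuration b : {0,…,L} → {−1,0,1}, the coefficient of the tensor basis vector c_b := u_{b(0)} ⊗ u_{b(1)} ⊗ ⋯ ⊗ u_{b(L)} in the expansion of F_tot^d Ω is 0 if d(b) ≠ d, and equals q^{−d(d−1)} [d]_{q²}! · G(b) if d(b) = d, where G(b) := [ ∏_{j=1}^{d(1)} Q q^{L + x_j − N→^1_{x_j}(b)} ] · ζ_0 · [ ∏_{i=1}^{d(−1)} q^{L − y_i − N→^1_{y_i}(b)} ], with ζ_0 := Q q^{L − d(1)} if b(0) = 1, ζ_0 := 1 if b(0) = 0, and ζ_0 := q^{L − d(1)} if b(0) = −1. -/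

import Mathlib

open Matrix BigOperators Finset

noncomputable section

namespace Stmt7

/-- Index of the tensor basis of `W = V^{⊗(L+1)}`, where `V = ℝ³` has ordered basis
`(u₋₁, u₀, u₁)` encoded as `Fin 3` (`0 ↦ u₋₁`, `1 ↦ u₀`, `2 ↦ u₁`); tensor factors
are indexed by the sites `0,1,…,L`. -/
abbrev Conf (L : ℕ) := Fin (L + 1) → Fin 3

/-- The matrix `E`: `E u₀ = u₋₁`, `E u₋₁ = E u₁ = 0`. -/
def Emat : Matrix (Fin 3) (Fin 3) ℝ := fun a b => if a = 0 ∧ b = 1 then 1 else 0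

/-- The matrix `F`: `F u₀ = u₁`, `F u₋₁ = F u₁ = 0`. -/
def Fmat : Matrix (Fin 3) (Fin 3) ℝ := fun a b => if a = 2 ∧ b = 1 then 1 else 0

/-- `K = diag(q, q⁻¹, 1)` (entries in the order `u₋₁, u₀, u₁`). -/
def Kmat (q : ℝ) : Matrix (Fin 3) (Fin 3) ℝ := Matrix.diagonal ![q, q⁻¹, 1]

/-- `k = diag(q⁻¹, q², q⁻¹)` (entries in the order `u₋₁, u₀, u₁`). -/
def kmat (q : ℝ) : Matrix (Fin 3) (Fin 3) ℝ := Matrix.diagonal ![q⁻¹, q ^ 2, q⁻¹]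

/-- `f = E + Q·F`. -/
def fmat (Q : ℝ) : Matrix (Fin 3) (Fin 3) ℝ := Emat + Q • Fmat

/-- `a₀ = f ⊗ (K⁻¹)^{⊗L}` as a matrix in the tensor basis of `W`. -/
def a0 (L : ℕ) (q Q : ℝ) : Matrix (Conf L) (Conf L) ℝ :=
  fun b b' => ∏ s : Fin (L + 1),
    (if s = 0 then fmat Q (b s) (b' s) else (Kmat q)⁻¹ (b s) (b' s))

/-- `a_j⁺ = Id^{⊗j} ⊗ E ⊗ (K⁻¹)^{⊗(L−j)}` (the `E` factor at site `j`). -/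
def aP (L : ℕ) (q : ℝ) (j : ℕ) : Matrix (Conf L) (Conf L) ℝ :=
  fun b b' => ∏ s : Fin (L + 1),
    (if (s : ℕ) < j then (if b s = b' s then (1 : ℝ) else 0)
     else if (s : ℕ) = j then Emat (b s) (b' s)
     else (Kmat q)⁻¹ (b s) (b' s))

/-- `a_j⁻ = Q · k^{⊗j} ⊗ F ⊗ (K⁻¹)^{⊗(L−j)}` (the `F` factor at site `j`). -/
def aM (L : ℕ) (q Q : ℝ) (j : ℕ) : Matrix (Conf L) (Conf L) ℝ :=
  fun b b' => Q * ∏ s : Fin (L + 1),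
    (if (s : ℕ) < j then kmat q (b s) (b' s)
     else if (s : ℕ) = j then Fmat (b s) (b' s)
     else (Kmat q)⁻¹ (b s) (b' s))


/-- The `q²`-deformed integer `[n]_{q²} = (1 − q^{2n})/(1 − q²)`. -/
def qInt (q : ℝ) (n : ℕ) : ℝ := (1 - q ^ (2 * n)) / (1 - q ^ 2)

/-- The `q²`-deformed factorial `[d]_{q²}! = [1]_{q²} ⋯ [d]_{q²}`, with `[0]_{q²}! = 1`. -/
def qFact (q : ℝ) : ℕ → ℝ
  | 0 => 1
  | n + 1 => qFact q n * qInt q (n + 1)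

/-- `F_tot = a₀ + Σ_{y=1}^{L} a_y⁺ + Σ_{x=1}^{L} a_x⁻`. -/
def Ftot (L : ℕ) (q Q : ℝ) : Matrix (Conf L) (Conf L) ℝ :=
  a0 L q Q + ∑ y ∈ Finset.Icc 1 L, aP L q y + ∑ x ∈ Finset.Icc 1 L, aM L q Q x

/-- The vector `Ω = u₀^{⊗(L+1)}`, i.e. the tensor basis vector of the configuration
with every site equal to `u₀`. -/
def Omega (L : ℕ) : Conf L → ℝ := fun b => if b = fun _ => 1 then 1 else 0


/-- `N→¹_x(b)`: the number of sites strictly to the right of `x` whose `b`-value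
is `1` (encoded as `2`). -/
def Nr1 (L : ℕ) (b : Conf L) (x : Fin (L + 1)) : ℕ :=
  (Finset.univ.filter (fun y : Fin (L + 1) => x < y ∧ b y = 2)).card

/-- `d(1)`: the number of sites in `{1,…,L}` with `b`-value `1` (encoded as `2`). -/
def d1 (L : ℕ) (b : Conf L) : ℕ :=
  (Finset.univ.filter (fun x : Fin (L + 1) => 0 < (x : ℕ) ∧ b x = 2)).card

/-- `d(b)`: the total number of sites with nonzero `b`-value (value `≠ u₀`). -/
def dtot (L : ℕ) (b : Conf L) : ℕ :=
  (Finset.univ.filter (fun s : Fin (L + 1) => b s ≠ 1)).card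

/-- `ζ₀ = Q q^{L−d(1)}`, `1`, or `q^{L−d(1)}` according as `b(0) = 1`, `0`, or `−1`. -/
def zeta0 (L : ℕ) (q Q : ℝ) (b : Conf L) : ℝ :=
  if b 0 = 2 then Q * q ^ ((L : ℤ) - (d1 L b : ℤ))
  else if b 0 = 1 then 1
  else q ^ ((L : ℤ) - (d1 L b : ℤ))

/-- `G(b) = [∏_{j=1}^{d(1)} Q q^{L+x_j−N→¹_{x_j}(b)}] ζ₀ [∏_{i=1}^{d(−1)} q^{L−y_i−N→¹_{y_i}(b)}]`,
where `x_1 < ⋯ < x_{d(1)}` are the sites in `{1,…,L}` with `b`-value `1` and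
`y_1 < ⋯ < y_{d(−1)}` those with `b`-value `−1`. -/
def Gfun (L : ℕ) (q Q : ℝ) (b : Conf L) : ℝ :=
  (∏ x ∈ Finset.univ.filter (fun x : Fin (L + 1) => 0 < (x : ℕ) ∧ b x = 2),
      Q * q ^ ((L : ℤ) + ((x : ℕ) : ℤ) - (Nr1 L b x : ℤ))) *
    zeta0 L q Q b *
    (∏ y ∈ Finset.univ.filter (fun y : Fin (L + 1) => 0 < (y : ℕ) ∧ b y = 0),
      q ^ ((L : ℤ) - ((y : ℕ) : ℤ) - (Nr1 L b y : ℤ)))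

def wKv (q : ℝ) : Fin 3 → ℝ := ![q⁻¹, q, 1]
def wkv (q : ℝ) : Fin 3 → ℝ := ![q⁻¹, q ^ 2, q⁻¹]

lemma Kmat_inv {q : ℝ} (hq : q ≠ 0) : (Kmat q)⁻¹ = Matrix.diagonal (wKv q) := by
  apply Matrix.inv_eq_right_inv
  rw [Kmat, wKv, Matrix.diagonal_mul_diagonal]
  have : (fun i => ![q, q⁻¹, 1] i * ![q⁻¹, q, 1] i) = fun _ => (1:ℝ) := by
    funext i
    fin_cases i <;> simp [mul_inv_cancel₀ hq, inv_mul_cancel₀ hq]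
  rw [this, Matrix.diagonal_one]

lemma wKv_ne_zero {q : ℝ} (hq : q ≠ 0) (v : Fin 3) : wKv q v ≠ 0 := by
  fin_cases v <;> simp [wKv, hq]

lemma aP_mulVec {L : ℕ} {q : ℝ} (hq : q ≠ 0) (j : ℕ) (hj : j < L + 1)
    (w : Conf L → ℝ) (b : Conf L) :
    (aP L q j *ᵥ w) b =
      (if b ⟨j, hj⟩ = 0 then
        (∏ s ∈ univ.filter (fun s : Fin (L+1) => j < (s : ℕ)), wKv q (b s))
       else 0) * w (Function.update b ⟨j, hj⟩ 1) := by
  classical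
  have hdiag := Kmat_inv hq
  simp only [Matrix.mulVec, dotProduct]
  rw [Finset.sum_eq_single (Function.update b ⟨j, hj⟩ 1)]
  · congr 1
    rw [aP]
    rw [← Finset.prod_filter_mul_prod_filter_not univ (fun s : Fin (L+1) => (s : ℕ) < j)]
    rw [← Finset.prod_filter_mul_prod_filter_not
        (univ.filter (fun s : Fin (L+1) => ¬ (s : ℕ) < j)) (fun s : Fin (L+1) => (s : ℕ) = j)]
    have h1 : ∀ s ∈ univ.filter (fun s : Fin (L+1) => (s : ℕ) < j),
        (if (s : ℕ) < j then (if b s = Function.update b ⟨j, hj⟩ 1 s then (1 : ℝ) else 0)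
         else if (s : ℕ) = j then Emat (b s) (Function.update b ⟨j, hj⟩ 1 s)
         else (Kmat q)⁻¹ (b s) (Function.update b ⟨j, hj⟩ 1 s)) = 1 := by
      intro s hs
      simp only [mem_filter, mem_univ, true_and] at hs
      have hne : s ≠ ⟨j, hj⟩ := by
        intro h; subst h; exact absurd hs (lt_irrefl _)
      rw [if_pos hs, Function.update_of_ne hne, if_pos rfl]
    have h2 : (univ.filter (fun s : Fin (L+1) => ¬ (s : ℕ) < j)).filter
        (fun s : Fin (L+1) => (s : ℕ) = j) = {(⟨j, hj⟩ : Fin (L+1))} := by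
      ext s; simp only [mem_filter, mem_univ, true_and, mem_singleton, Fin.ext_iff]
      omega
    have h3 : (univ.filter (fun s : Fin (L+1) => ¬ (s : ℕ) < j)).filter
        (fun s : Fin (L+1) => ¬ (s : ℕ) = j) = univ.filter (fun s : Fin (L+1) => j < (s : ℕ)) := by
      ext s; simp only [mem_filter, mem_univ, true_and]; omega
    rw [Finset.prod_congr rfl h1, Finset.prod_const_one, one_mul, h2, h3,
      Finset.prod_singleton]
    have h4 : ∀ s ∈ univ.filter (fun s : Fin (L+1) => j < (s : ℕ)),
        (if (s : ℕ) < j then (if b s = Function.update b ⟨j, hj⟩ 1 s then (1 : ℝ) else 0)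
         else if (s : ℕ) = j then Emat (b s) (Function.update b ⟨j, hj⟩ 1 s)
         else (Kmat q)⁻¹ (b s) (Function.update b ⟨j, hj⟩ 1 s)) = wKv q (b s) := by
      intro s hs
      simp only [mem_filter, mem_univ, true_and] at hs
      have hne : s ≠ ⟨j, hj⟩ := by
        intro h; subst h; exact absurd hs (lt_irrefl _)
      rw [if_neg (by omega), if_neg (by omega), Function.update_of_ne hne, hdiag,
        Matrix.diagonal_apply_eq]
    rw [Finset.prod_congr rfl h4, Function.update_self]
    by_cases hb : b ⟨j, hj⟩ = 0
    · simp [Emat, hb]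
    · simp [Emat, hb]
  · intro b' _ hne
    have hzero : aP L q j b b' = 0 := by
      by_contra hnz
      apply hne
      funext s
      rw [aP] at hnz
      have hfac := fun s (hs : s ∈ univ) => Finset.prod_ne_zero_iff.mp hnz s hs
      by_cases hsj : s = (⟨j, hj⟩ : Fin (L+1))
      · subst hsj
        have := hfac (⟨j, hj⟩ : Fin (L+1)) (mem_univ _)
        rw [if_neg (by simp), if_pos rfl, Emat] at this
        have hcond : b ⟨j, hj⟩ = 0 ∧ b' ⟨j, hj⟩ = 1 := by
          by_contra hcon
          rw [if_neg hcon] at this; exact this rfl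
        rw [Function.update_self, hcond.2]
      · rw [Function.update_of_ne hsj]
        have := hfac s (mem_univ _)
        have hsj' : (s : ℕ) ≠ j := fun h => hsj (Fin.ext h)
        by_cases hlt : (s : ℕ) < j
        · rw [if_pos hlt] at this
          by_contra hcon
          rw [if_neg (fun h => hcon h.symm)] at this
          · exact this rfl
        · rw [if_neg hlt, if_neg hsj', hdiag] at this
          by_contra hcon
          rw [Matrix.diagonal_apply_ne (wKv q) (fun h => hcon h.symm)] at this
          exact this rfl
    rw [hzero, zero_mul]
  · intro h; exact absurd (Finset.mem_univ _) h

lemma kmat_eq_diag (q : ℝ) : kmat q = Matrix.diagonal (wkv q) := rfl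

lemma wkv_ne_zero {q : ℝ} (hq : q ≠ 0) (v : Fin 3) : wkv q v ≠ 0 := by
  fin_cases v <;> simp [wkv, hq]

lemma fmat_apply_ne_one {Q : ℝ} {a c : Fin 3} (hc : c ≠ 1) : fmat Q a c = 0 := by
  simp [fmat, Emat, Fmat, Matrix.add_apply, hc]

lemma fmat_apply_one (Q : ℝ) (a : Fin 3) :
    fmat Q a 1 = if a = 0 then 1 else if a = 2 then Q else 0 := by
  fin_cases a <;> simp [fmat, Emat, Fmat, Matrix.add_apply]

lemma a0_mulVec {L : ℕ} {q Q : ℝ} (hq : q ≠ 0)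
    (w : Conf L → ℝ) (b : Conf L) :
    (a0 L q Q *ᵥ w) b =
      (if b 0 = 0 then 1 else if b 0 = 2 then Q else 0) *
        (∏ s ∈ univ.filter (fun s : Fin (L+1) => 0 < (s : ℕ)), wKv q (b s)) *
        w (Function.update b 0 1) := by
  classical
  have hdiag := Kmat_inv hq
  simp only [Matrix.mulVec, dotProduct]
  rw [Finset.sum_eq_single (Function.update b 0 1)]
  · congr 1
    rw [a0]
    rw [← Finset.prod_filter_mul_prod_filter_not univ (fun s : Fin (L+1) => s = 0)]
    have h2 : univ.filter (fun s : Fin (L+1) => s = 0) = {(0 : Fin (L+1))} := by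
      ext s; simp
    have h3 : univ.filter (fun s : Fin (L+1) => ¬ s = 0)
        = univ.filter (fun s : Fin (L+1) => 0 < (s : ℕ)) := by
      ext s; simp only [mem_filter, mem_univ, true_and]
      exact ⟨fun h => Nat.pos_of_ne_zero (fun h' => h (Fin.ext h')), fun h h' => by subst h'; exact absurd h (lt_irrefl _)⟩
    rw [h2, h3, Finset.prod_singleton]
    have h4 : ∀ s ∈ univ.filter (fun s : Fin (L+1) => 0 < (s : ℕ)),
        (if s = 0 then fmat Q (b s) (Function.update b 0 1 s)
         else (Kmat q)⁻¹ (b s) (Function.update b 0 1 s)) = wKv q (b s) := by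
      intro s hs
      simp only [mem_filter, mem_univ, true_and] at hs
      have hne : s ≠ 0 := fun h => by subst h; exact absurd hs (lt_irrefl _)
      rw [if_neg hne, Function.update_of_ne hne, hdiag, Matrix.diagonal_apply_eq]
    rw [Finset.prod_congr rfl h4, if_pos rfl, Function.update_self, fmat_apply_one]
  · intro b' _ hne
    have hzero : a0 L q Q b b' = 0 := by
      by_contra hnz
      apply hne
      funext s
      rw [a0] at hnz
      have hfac := fun s (hs : s ∈ univ) => Finset.prod_ne_zero_iff.mp hnz s hs
      by_cases hsj : s = (0 : Fin (L+1))
      · subst hsj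
        have := hfac (0 : Fin (L+1)) (mem_univ _)
        rw [if_pos rfl] at this
        have h1 : b' 0 = 1 := by
          by_contra hcon
          exact this (fmat_apply_ne_one hcon)
        rw [Function.update_self, h1]
      · rw [Function.update_of_ne hsj]
        have := hfac s (mem_univ _)
        rw [if_neg hsj, hdiag] at this
        by_contra hcon
        rw [Matrix.diagonal_apply_ne (wKv q) (fun h => hcon h.symm)] at this
        exact this rfl
    rw [hzero, zero_mul]
  · intro h; exact absurd (Finset.mem_univ _) h

lemma aM_mulVec {L : ℕ} {q Q : ℝ} (hq : q ≠ 0) (j : ℕ) (hj : j < L + 1)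
    (w : Conf L → ℝ) (b : Conf L) :
    (aM L q Q j *ᵥ w) b =
      Q * (if b ⟨j, hj⟩ = 2 then
        (∏ s ∈ univ.filter (fun s : Fin (L+1) => (s : ℕ) < j), wkv q (b s)) *
        (∏ s ∈ univ.filter (fun s : Fin (L+1) => j < (s : ℕ)), wKv q (b s))
       else 0) * w (Function.update b ⟨j, hj⟩ 1) := by
  classical
  have hdiag := Kmat_inv hq
  simp only [Matrix.mulVec, dotProduct]
  rw [Finset.sum_eq_single (Function.update b ⟨j, hj⟩ 1)]
  · congr 1
    rw [aM]
    congr 1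
    rw [← Finset.prod_filter_mul_prod_filter_not univ (fun s : Fin (L+1) => (s : ℕ) < j)]
    rw [← Finset.prod_filter_mul_prod_filter_not
        (univ.filter (fun s : Fin (L+1) => ¬ (s : ℕ) < j)) (fun s : Fin (L+1) => (s : ℕ) = j)]
    have h1 : ∀ s ∈ univ.filter (fun s : Fin (L+1) => (s : ℕ) < j),
        (if (s : ℕ) < j then kmat q (b s) (Function.update b ⟨j, hj⟩ 1 s)
         else if (s : ℕ) = j then Fmat (b s) (Function.update b ⟨j, hj⟩ 1 s)
         else (Kmat q)⁻¹ (b s) (Function.update b ⟨j, hj⟩ 1 s)) = wkv q (b s) := by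
      intro s hs
      simp only [mem_filter, mem_univ, true_and] at hs
      have hne : s ≠ ⟨j, hj⟩ := by
        intro h; subst h; exact absurd hs (lt_irrefl _)
      rw [if_pos hs, Function.update_of_ne hne, kmat_eq_diag, Matrix.diagonal_apply_eq]
    have h2 : (univ.filter (fun s : Fin (L+1) => ¬ (s : ℕ) < j)).filter
        (fun s : Fin (L+1) => (s : ℕ) = j) = {(⟨j, hj⟩ : Fin (L+1))} := by
      ext s; simp only [mem_filter, mem_univ, true_and, mem_singleton, Fin.ext_iff]
      omega
    have h3 : (univ.filter (fun s : Fin (L+1) => ¬ (s : ℕ) < j)).filter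
        (fun s : Fin (L+1) => ¬ (s : ℕ) = j) = univ.filter (fun s : Fin (L+1) => j < (s : ℕ)) := by
      ext s; simp only [mem_filter, mem_univ, true_and]; omega
    have h4 : ∀ s ∈ univ.filter (fun s : Fin (L+1) => j < (s : ℕ)),
        (if (s : ℕ) < j then kmat q (b s) (Function.update b ⟨j, hj⟩ 1 s)
         else if (s : ℕ) = j then Fmat (b s) (Function.update b ⟨j, hj⟩ 1 s)
         else (Kmat q)⁻¹ (b s) (Function.update b ⟨j, hj⟩ 1 s)) = wKv q (b s) := by
      intro s hs
      simp only [mem_filter, mem_univ, true_and] at hs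
      have hne : s ≠ ⟨j, hj⟩ := by
        intro h; subst h; exact absurd hs (lt_irrefl _)
      rw [if_neg (by omega), if_neg (by omega), Function.update_of_ne hne, hdiag,
        Matrix.diagonal_apply_eq]
    rw [Finset.prod_congr rfl h1, h2, h3, Finset.prod_congr rfl h4, Finset.prod_singleton,
      Function.update_self]
    by_cases hb : b ⟨j, hj⟩ = 2
    · simp [Fmat, hb]
    · simp [Fmat, hb]
  · intro b' _ hne
    have hzero : aM L q Q j b b' = 0 := by
      by_contra hnz
      apply hne
      funext s
      rw [aM] at hnz
      have hnz' : (∏ s : Fin (L+1),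
          (if (s : ℕ) < j then kmat q (b s) (b' s)
           else if (s : ℕ) = j then Fmat (b s) (b' s)
           else (Kmat q)⁻¹ (b s) (b' s))) ≠ 0 := by
        intro h; exact hnz (by rw [h, mul_zero])
      have hfac := fun s (hs : s ∈ univ) => Finset.prod_ne_zero_iff.mp hnz' s hs
      by_cases hsj : s = (⟨j, hj⟩ : Fin (L+1))
      · subst hsj
        have := hfac (⟨j, hj⟩ : Fin (L+1)) (mem_univ _)
        rw [if_neg (by simp), if_pos rfl, Fmat] at this
        have hcond : b ⟨j, hj⟩ = 2 ∧ b' ⟨j, hj⟩ = 1 := by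
          by_contra hcon
          rw [if_neg hcon] at this; exact this rfl
        rw [Function.update_self, hcond.2]
      · rw [Function.update_of_ne hsj]
        have := hfac s (mem_univ _)
        have hsj' : (s : ℕ) ≠ j := fun h => hsj (Fin.ext h)
        by_cases hlt : (s : ℕ) < j
        · rw [if_pos hlt, kmat_eq_diag] at this
          by_contra hcon
          rw [Matrix.diagonal_apply_ne (wkv q) (fun h => hcon h.symm)] at this
          exact this rfl
        · rw [if_neg hlt, if_neg hsj', hdiag] at this
          by_contra hcon
          rw [Matrix.diagonal_apply_ne (wKv q) (fun h => hcon h.symm)] at this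
          exact this rfl
    rw [hzero, zero_mul]
  · intro h; exact absurd (Finset.mem_univ _) h

def coefS (L : ℕ) (q Q : ℝ) (b : Conf L) (j : Fin (L+1)) : ℝ :=
  if b j = 0 then ∏ s ∈ univ.filter (fun s : Fin (L+1) => (j : ℕ) < (s : ℕ)), wKv q (b s)
  else if b j = 2 then
    Q * ((∏ s ∈ univ.filter (fun s : Fin (L+1) => (s : ℕ) < (j : ℕ)), wkv q (b s)) *
      (∏ s ∈ univ.filter (fun s : Fin (L+1) => (j : ℕ) < (s : ℕ)), wKv q (b s)))
  else 0

lemma sum_mulVec {L : ℕ} {ι : Type*} (s : Finset ι) (A : ι → Matrix (Conf L) (Conf L) ℝ)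
    (w : Conf L → ℝ) : (∑ i ∈ s, A i) *ᵥ w = ∑ i ∈ s, (A i *ᵥ w) := by
  induction s using Finset.cons_induction with
  | empty => simp [Matrix.zero_mulVec]
  | cons a s ha ih => rw [Finset.sum_cons, Finset.sum_cons, Matrix.add_mulVec, ih]

lemma Ftot_mulVec {L : ℕ} {q Q : ℝ} (hq : q ≠ 0) (w : Conf L → ℝ) (b : Conf L) :
    (Ftot L q Q *ᵥ w) b = ∑ j : Fin (L+1), coefS L q Q b j * w (Function.update b j 1) := by
  classical
  rw [Ftot, Matrix.add_mulVec, Matrix.add_mulVec, sum_mulVec, sum_mulVec]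
  simp only [Pi.add_apply, Finset.sum_apply]
  have hP : ∑ j ∈ Finset.Icc 1 L, (aP L q j *ᵥ w) b
      = ∑ jf ∈ univ.filter (fun jf : Fin (L+1) => jf ≠ 0),
          (if b jf = 0 then ∏ s ∈ univ.filter (fun s : Fin (L+1) => (jf : ℕ) < (s : ℕ)),
            wKv q (b s) else 0) * w (Function.update b jf 1) := by
    apply Finset.sum_bij (i := fun (j : ℕ) (hj : j ∈ Finset.Icc 1 L) =>
      (⟨j, by simp only [Finset.mem_Icc] at hj; omega⟩ : Fin (L+1)))
    · intro a ha
      simp only [Finset.mem_Icc] at ha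
      simp only [mem_filter, mem_univ, true_and, ne_eq, Fin.ext_iff]
      simp only [Fin.val_zero]
      omega
    · intro a ha a' ha' h
      simpa [Fin.ext_iff] using h
    · intro jf hjf
      simp only [mem_filter, mem_univ, true_and, ne_eq, Fin.ext_iff, Fin.val_zero] at hjf
      refine ⟨(jf : ℕ), by simp only [Finset.mem_Icc]; omega, by simp [Fin.ext_iff]⟩
    · intro j hj
      simp only [Finset.mem_Icc] at hj
      exact aP_mulVec hq j (by omega) w b
  have hM : ∑ j ∈ Finset.Icc 1 L, (aM L q Q j *ᵥ w) b
      = ∑ jf ∈ univ.filter (fun jf : Fin (L+1) => jf ≠ 0),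
          (Q * (if b jf = 2 then
            (∏ s ∈ univ.filter (fun s : Fin (L+1) => (s : ℕ) < (jf : ℕ)), wkv q (b s)) *
            (∏ s ∈ univ.filter (fun s : Fin (L+1) => (jf : ℕ) < (s : ℕ)), wKv q (b s))
           else 0)) * w (Function.update b jf 1) := by
    apply Finset.sum_bij (i := fun (j : ℕ) (hj : j ∈ Finset.Icc 1 L) =>
      (⟨j, by simp only [Finset.mem_Icc] at hj; omega⟩ : Fin (L+1)))
    · intro a ha
      simp only [Finset.mem_Icc] at ha
      simp only [mem_filter, mem_univ, true_and, ne_eq, Fin.ext_iff, Fin.val_zero]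
      omega
    · intro a ha a' ha' h
      simpa [Fin.ext_iff] using h
    · intro jf hjf
      simp only [mem_filter, mem_univ, true_and, ne_eq, Fin.ext_iff, Fin.val_zero] at hjf
      refine ⟨(jf : ℕ), by simp only [Finset.mem_Icc]; omega, by simp [Fin.ext_iff]⟩
    · intro j hj
      simp only [Finset.mem_Icc] at hj
      exact aM_mulVec hq j (by omega) w b
  rw [hP, hM, a0_mulVec hq w b]
  rw [← Finset.sum_filter_add_sum_filter_not univ (fun jf : Fin (L+1) => jf = 0)]
  have h0 : univ.filter (fun jf : Fin (L+1) => jf = 0) = {(0 : Fin (L+1))} := by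
    ext s; simp
  have h0' : univ.filter (fun jf : Fin (L+1) => ¬ jf = 0)
      = univ.filter (fun jf : Fin (L+1) => jf ≠ 0) := rfl
  rw [h0, h0', Finset.sum_singleton]
  have hzero : coefS L q Q b 0 * w (Function.update b 0 1)
      = (if b 0 = 0 then 1 else if b 0 = 2 then Q else 0) *
        (∏ s ∈ univ.filter (fun s : Fin (L+1) => 0 < (s : ℕ)), wKv q (b s)) *
        w (Function.update b 0 1) := by
    have hempty : univ.filter (fun s : Fin (L+1) => (s : ℕ) < ((0 : Fin (L+1)) : ℕ)) = ∅ := by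
      ext s; simp
    rcases show b 0 = 0 ∨ b 0 = 1 ∨ b 0 = 2 by omega with h | h | h <;>
      simp [coefS, h, hempty, Fin.val_zero, mul_assoc]
  rw [hzero, add_assoc]
  congr 1
  rw [← Finset.sum_add_distrib]
  apply Finset.sum_congr rfl
  intro jf hjf
  rcases show b jf = 0 ∨ b jf = 1 ∨ b jf = 2 by omega with h | h | h <;>
    simp [coefS, h, mul_assoc]

section Counting
variable {L : ℕ}

lemma prod_zpow_sum {q : ℝ} (hq : q ≠ 0) {ι : Type*} (S : Finset ι) (g : ι → ℤ) :
    ∏ s ∈ S, q ^ g s = q ^ (∑ s ∈ S, g s) := by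
  induction S using Finset.cons_induction with
  | empty => simp
  | cons a s ha ih => rw [Finset.prod_cons, Finset.sum_cons, zpow_add₀ hq, ih]

lemma sum_eval3 (b : Conf L) (g : Fin 3 → ℤ) (S : Finset (Fin (L+1))) :
    ∑ s ∈ S, g (b s) =
      g 0 * #(S.filter (fun s => b s = 0)) + g 1 * #(S.filter (fun s => b s = 1))
        + g 2 * #(S.filter (fun s => b s = 2)) := by
  classical
  induction S using Finset.cons_induction with
  | empty => simp
  | cons a s ha ih =>
    rw [Finset.sum_cons, ih]
    have hc : ∀ (p : Fin (L+1) → Prop) (inst : DecidablePred p),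
        (#(Finset.filter p (Finset.cons a s ha)) : ℤ)
          = #(Finset.filter p s) + (if p a then 1 else 0) := by
      intro p inst
      rw [Finset.filter_cons]
      by_cases hp : p a
      · rw [if_pos hp, Finset.card_cons, if_pos hp]; push_cast; ring
      · rw [if_neg hp, if_neg hp, add_zero]
    rw [hc _ _, hc _ _, hc _ _]
    rcases show b a = 0 ∨ b a = 1 ∨ b a = 2 by omega with h | h | h <;> rw [h] <;>
      simp <;> ring

lemma card_split_val (b : Conf L) (S : Finset (Fin (L+1))) :
    (#S : ℤ) = #(S.filter fun s => b s = 0) + #(S.filter fun s => b s = 1)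
      + #(S.filter fun s => b s = 2) := by
  have h := sum_eval3 b (fun _ => (1:ℤ)) S
  simpa using h

lemma prod_wKv {q : ℝ} (hq : q ≠ 0) (b : Conf L) (S : Finset (Fin (L+1))) :
    ∏ s ∈ S, wKv q (b s) =
      q ^ ((#(S.filter fun s => b s = 1) : ℤ) - (#(S.filter fun s => b s = 0) : ℤ)) := by
  have h1 : ∀ s ∈ S, wKv q (b s) = q ^ ((![-1, 1, 0] : Fin 3 → ℤ) (b s)) := by
    intro s _
    rcases show b s = 0 ∨ b s = 1 ∨ b s = 2 by omega with h | h | h <;> rw [h]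
    · show wKv q 0 = q ^ (-1 : ℤ)
      rw [_root_.zpow_neg_one]; rfl
    · show wKv q 1 = q ^ (1 : ℤ)
      rw [zpow_one]; rfl
    · show wKv q 2 = q ^ (0 : ℤ)
      rw [zpow_zero]; rfl
  rw [Finset.prod_congr rfl h1, prod_zpow_sum hq, sum_eval3 b]
  congr 1
  show (-1 : ℤ) * _ + 1 * _ + 0 * _ = _
  ring

lemma prod_wkv {q : ℝ} (hq : q ≠ 0) (b : Conf L) (S : Finset (Fin (L+1))) :
    ∏ s ∈ S, wkv q (b s) =
      q ^ (2 * (#(S.filter fun s => b s = 1) : ℤ) - (#(S.filter fun s => b s = 0) : ℤ)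
        - (#(S.filter fun s => b s = 2) : ℤ)) := by
  have h1 : ∀ s ∈ S, wkv q (b s) = q ^ ((![-1, 2, -1] : Fin 3 → ℤ) (b s)) := by
    intro s _
    rcases show b s = 0 ∨ b s = 1 ∨ b s = 2 by omega with h | h | h <;> rw [h]
    · show wkv q 0 = q ^ (-1 : ℤ)
      rw [_root_.zpow_neg_one]; rfl
    · show wkv q 1 = q ^ (2 : ℤ)
      rw [show (2 : ℤ) = ((2 : ℕ) : ℤ) from rfl, zpow_natCast]; rfl
    · show wkv q 2 = q ^ (-1 : ℤ)
      rw [_root_.zpow_neg_one]; rfl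
  rw [Finset.prod_congr rfl h1, prod_zpow_sum hq, sum_eval3 b]
  congr 1
  show (-1 : ℤ) * _ + 2 * _ + (-1) * _ = _
  ring

lemma card_tri (p : Fin (L+1) → Prop) [DecidablePred p] (j : Fin (L+1)) :
    #(univ.filter p) = #(univ.filter fun s : Fin (L+1) => (s:ℕ) < (j:ℕ) ∧ p s)
      + ((if p j then 1 else 0)
        + #(univ.filter fun s : Fin (L+1) => (j:ℕ) < (s:ℕ) ∧ p s)) := by
  classical
  have hsplit : univ.filter p = (univ.filter fun s : Fin (L+1) => (s:ℕ) < (j:ℕ) ∧ p s)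
      ∪ ((univ.filter fun s : Fin (L+1) => s = j ∧ p s)
        ∪ (univ.filter fun s : Fin (L+1) => (j:ℕ) < (s:ℕ) ∧ p s)) := by
    ext s
    simp only [mem_filter, mem_univ, true_and, mem_union]
    constructor
    · intro h
      rcases lt_trichotomy (s : ℕ) (j : ℕ) with h' | h' | h'
      · tauto
      · exact Or.inr (Or.inl ⟨Fin.ext h', h⟩)
      · tauto
    · rintro (⟨_, h⟩ | ⟨_, h⟩ | ⟨_, h⟩) <;> exact h
  have hmid : #(univ.filter fun s : Fin (L+1) => s = j ∧ p s) = if p j then 1 else 0 := by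
    by_cases hp : p j
    · rw [if_pos hp]
      have : univ.filter (fun s : Fin (L+1) => s = j ∧ p s) = {j} := by
        ext s; simp only [mem_filter, mem_univ, true_and, mem_singleton]
        exact ⟨fun h => h.1, fun h => ⟨h, h ▸ hp⟩⟩
      rw [this, Finset.card_singleton]
    · rw [if_neg hp]
      have : univ.filter (fun s : Fin (L+1) => s = j ∧ p s) = ∅ := by
        ext s; simp only [mem_filter, mem_univ, true_and, Finset.notMem_empty, iff_false]
        rintro ⟨rfl, h⟩; exact hp h
      rw [this, Finset.card_empty]
  have hd1 : Disjoint (univ.filter fun s : Fin (L+1) => s = j ∧ p s)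
      (univ.filter fun s : Fin (L+1) => (j:ℕ) < (s:ℕ) ∧ p s) := by
    rw [Finset.disjoint_left]
    intro s hs ht
    simp only [mem_filter, mem_univ, true_and] at hs ht
    rcases hs with ⟨rfl, -⟩
    exact absurd ht.1 (lt_irrefl _)
  have hd2 : Disjoint (univ.filter fun s : Fin (L+1) => (s:ℕ) < (j:ℕ) ∧ p s)
      ((univ.filter fun s : Fin (L+1) => s = j ∧ p s)
        ∪ (univ.filter fun s : Fin (L+1) => (j:ℕ) < (s:ℕ) ∧ p s)) := by
    rw [Finset.disjoint_left]
    intro s hs ht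
    simp only [mem_filter, mem_univ, true_and, mem_union] at hs ht
    rcases ht with ⟨rfl, -⟩ | ⟨h, -⟩
    · exact absurd hs.1 (lt_irrefl _)
    · omega
  rw [hsplit, Finset.card_union_of_disjoint hd2, Finset.card_union_of_disjoint hd1, hmid]

lemma card_lt_val (j : Fin (L+1)) :
    #(univ.filter fun s : Fin (L+1) => (s:ℕ) < (j:ℕ)) = (j : ℕ) := by
  have : (univ.filter fun s : Fin (L+1) => (s:ℕ) < (j:ℕ)) = Finset.Iio j := by
    ext s
    simp only [mem_filter, mem_univ, true_and, Finset.mem_Iio]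
    omega
  rw [this, Fin.card_Iio]

lemma card_gt_val (j : Fin (L+1)) :
    #(univ.filter fun s : Fin (L+1) => (j:ℕ) < (s:ℕ)) = L - (j : ℕ) := by
  have h := card_tri (fun _ => True) j
  simp only [Finset.filter_true, if_pos trivial, Finset.card_univ, Fintype.card_fin] at h
  have h2 : (univ.filter fun s : Fin (L+1) => (s:ℕ) < (j:ℕ) ∧ True)
      = univ.filter fun s : Fin (L+1) => (s:ℕ) < (j:ℕ) := by simp
  have h3 : (univ.filter fun s : Fin (L+1) => (j:ℕ) < (s:ℕ) ∧ True)
      = univ.filter fun s : Fin (L+1) => (j:ℕ) < (s:ℕ) := by simp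
  rw [h2, h3, card_lt_val] at h
  omega

end Counting

section UpdateLemmas
variable {L : ℕ}

lemma Nr1_eq_val (b : Conf L) (x : Fin (L+1)) :
    Nr1 L b x = #(univ.filter fun y : Fin (L+1) => (x:ℕ) < (y:ℕ) ∧ b y = 2) := by
  rw [Nr1]
  congr 1

lemma Nr1_update_eq (b : Conf L) (j x : Fin (L+1)) (h : ¬((x:ℕ) < (j:ℕ) ∧ b j = 2)) :
    Nr1 L (Function.update b j 1) x = Nr1 L b x := by
  rw [Nr1, Nr1]
  congr 1
  ext y
  simp only [mem_filter, mem_univ, true_and]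
  by_cases hy : y = j
  · subst hy
    rw [Function.update_self]
    rw [Fin.lt_def]
    constructor
    · rintro ⟨-, h1⟩; exact absurd h1 (by omega)
    · rintro ⟨h1, h2⟩; exact absurd ⟨h1, h2⟩ h
  · rw [Function.update_of_ne hy]

lemma Nr1_update_lt (b : Conf L) (j x : Fin (L+1)) (hx : (x:ℕ) < (j:ℕ)) (hbj : b j = 2) :
    Nr1 L b x = Nr1 L (Function.update b j 1) x + 1 := by
  rw [Nr1, Nr1]
  have hset : (univ.filter (fun y : Fin (L+1) => x < y ∧ b y = 2))
      = insert j (univ.filter (fun y : Fin (L+1) => x < y ∧ Function.update b j 1 y = 2)) := by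
    ext y
    simp only [mem_filter, mem_univ, true_and, Finset.mem_insert]
    by_cases hy : y = j
    · subst hy
      simp [Function.update_self, hbj, Fin.lt_def, hx]
    · rw [Function.update_of_ne hy]
      constructor
      · intro h; exact Or.inr h
      · rintro (h | h)
        · exact absurd h hy
        · exact h
  rw [hset, Finset.card_insert_of_notMem]
  simp only [mem_filter, mem_univ, true_and, Function.update_self, not_and]
  intro _
  omega

lemma filter_update (b : Conf L) (j : Fin (L+1)) (c : Fin 3) (hc : ¬ (1 : Fin 3) = c) :
    univ.filter (fun x : Fin (L+1) => 0 < (x:ℕ) ∧ (Function.update b j 1) x = c)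
      = (univ.filter fun x : Fin (L+1) => 0 < (x:ℕ) ∧ b x = c).erase j := by
  ext x
  simp only [mem_filter, mem_univ, true_and, Finset.mem_erase]
  by_cases hx : x = j
  · subst hx
    rw [Function.update_self]
    constructor
    · rintro ⟨-, h⟩; exact absurd h hc
    · rintro ⟨h, -⟩; exact absurd rfl h
  · rw [Function.update_of_ne hx]
    exact ⟨fun h => ⟨hx, h⟩, fun h => h.2⟩

lemma dtot_filter_update (b : Conf L) (j : Fin (L+1)) :
    univ.filter (fun s : Fin (L+1) => (Function.update b j 1) s ≠ 1)
      = (univ.filter fun s : Fin (L+1) => b s ≠ 1).erase j := by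
  ext x
  simp only [mem_filter, mem_univ, true_and, Finset.mem_erase]
  by_cases hx : x = j
  · subst hx
    rw [Function.update_self]
    simp
  · rw [Function.update_of_ne hx]
    exact ⟨fun h => ⟨hx, h⟩, fun h => h.2⟩

lemma dtot_update (b : Conf L) (j : Fin (L+1)) (hbj : b j ≠ 1) :
    dtot L (Function.update b j 1) = dtot L b - 1 := by
  rw [dtot, dtot, dtot_filter_update, Finset.card_erase_of_mem]
  simp [hbj]

lemma dtot_pos (b : Conf L) (j : Fin (L+1)) (hbj : b j ≠ 1) : 1 ≤ dtot L b := by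
  rw [dtot]
  rw [Nat.succ_le_iff, Finset.card_pos]
  exact ⟨j, by simp [hbj]⟩

end UpdateLemmas

def eIdx (L : ℕ) (b : Conf L) (j : Fin (L+1)) : ℕ :=
  #(univ.filter fun s : Fin (L+1) => (j:ℕ) < (s:ℕ) ∧ b s = 0) +
    (if b j = 2 then #(univ.filter fun s : Fin (L+1) => (s:ℕ) < (j:ℕ) ∧ b s ≠ 1) else 0)

lemma card_filter_zero_split {L : ℕ} (b : Conf L) (j : Fin (L+1)) (c : Fin 3) :
    (#(univ.filter fun s : Fin (L+1) => (s:ℕ) < (j:ℕ) ∧ b s = c) : ℤ)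
      = #(univ.filter fun s : Fin (L+1) => (0 < (s:ℕ) ∧ b s = c) ∧ (s:ℕ) < (j:ℕ))
        + (if b 0 = c ∧ 0 < (j:ℕ) then 1 else 0) := by
  classical
  by_cases h0 : b 0 = c ∧ 0 < (j:ℕ)
  · rw [if_pos h0]
    have hins : univ.filter (fun s : Fin (L+1) => (s:ℕ) < (j:ℕ) ∧ b s = c)
        = insert 0 (univ.filter fun s : Fin (L+1) => (0 < (s:ℕ) ∧ b s = c) ∧ (s:ℕ) < (j:ℕ)) := by
      ext x
      simp only [mem_filter, mem_univ, true_and, Finset.mem_insert]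
      constructor
      · rintro ⟨h1, h2⟩
        by_cases hx0 : (x:ℕ) = 0
        · exact Or.inl (Fin.ext (by rw [hx0]; rfl))
        · exact Or.inr ⟨⟨Nat.pos_of_ne_zero hx0, h2⟩, h1⟩
      · rintro (rfl | ⟨⟨h1, h2⟩, h3⟩)
        · exact ⟨h0.2, h0.1⟩
        · exact ⟨h3, h2⟩
    rw [hins, Finset.card_insert_of_notMem (by simp)]
    push_cast
    ring
  · rw [if_neg h0]
    have heq : univ.filter (fun s : Fin (L+1) => (s:ℕ) < (j:ℕ) ∧ b s = c)
        = univ.filter fun s : Fin (L+1) => (0 < (s:ℕ) ∧ b s = c) ∧ (s:ℕ) < (j:ℕ) := by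
      ext x
      simp only [mem_filter, mem_univ, true_and]
      constructor
      · rintro ⟨h1, h2⟩
        refine ⟨⟨?_, h2⟩, h1⟩
        rcases Nat.eq_zero_or_pos (x:ℕ) with h | h
        · have hx : x = 0 := Fin.ext (by rw [h]; rfl)
          rw [hx] at h2
          exact absurd ⟨h2, by omega⟩ h0
        · exact h
      · rintro ⟨⟨h1, h2⟩, h3⟩
        exact ⟨h3, h2⟩
    rw [heq]
    push_cast
    ring


section Bij
variable {L : ℕ}

lemma eIdx_aux (b : Conf L) (x y : Fin (L+1)) (hx : b x ≠ 1) (hy : b y ≠ 1)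
    (hxy : (x:ℕ) < (y:ℕ)) : eIdx L b x ≠ eIdx L b y := by
  classical
  have F1 := card_tri (fun s : Fin (L+1) => (x:ℕ) < (s:ℕ) ∧ b s = 0) y
  have F2 := card_tri (fun s : Fin (L+1) => (s:ℕ) < (y:ℕ) ∧ b s ≠ 1) x
  have hF2x : ((x:ℕ) < (y:ℕ) ∧ b x ≠ 1) := ⟨hxy, hx⟩
  rw [if_pos hF2x] at F2
  have hset2a : univ.filter (fun s : Fin (L+1) => (s:ℕ) < (x:ℕ) ∧ ((s:ℕ) < (y:ℕ) ∧ b s ≠ 1))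
      = univ.filter (fun s : Fin (L+1) => (s:ℕ) < (x:ℕ) ∧ b s ≠ 1) := by
    ext s
    simp only [mem_filter, mem_univ, true_and]
    constructor
    · rintro ⟨h1, -, h3⟩; exact ⟨h1, h3⟩
    · rintro ⟨h1, h3⟩; exact ⟨h1, by omega, h3⟩
  rw [hset2a] at F2
  have hset1a : univ.filter (fun s : Fin (L+1) => (y:ℕ) < (s:ℕ) ∧ ((x:ℕ) < (s:ℕ) ∧ b s = 0))
      = univ.filter (fun s : Fin (L+1) => (y:ℕ) < (s:ℕ) ∧ b s = 0) := by
    ext s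
    simp only [mem_filter, mem_univ, true_and]
    constructor
    · rintro ⟨h1, -, h3⟩; exact ⟨h1, h3⟩
    · rintro ⟨h1, h3⟩; exact ⟨h1, by omega, h3⟩
  rw [hset1a] at F1
  have F3 : #(univ.filter (fun s : Fin (L+1) => (s:ℕ) < (y:ℕ) ∧ ((x:ℕ) < (s:ℕ) ∧ b s = 0)))
      ≤ #(univ.filter (fun s : Fin (L+1) => (x:ℕ) < (s:ℕ) ∧ ((s:ℕ) < (y:ℕ) ∧ b s ≠ 1))) := by
    apply Finset.card_le_card
    intro s hs
    simp only [mem_filter, mem_univ, true_and] at hs ⊢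
    exact ⟨hs.2.1, hs.1, by rw [hs.2.2]; decide⟩
  rcases show b x = 0 ∨ b x = 2 by omega with hbx | hbx <;>
    rcases show b y = 0 ∨ b y = 2 by omega with hby | hby
  · rw [eIdx, eIdx, if_neg (by rw [hbx]; decide), if_neg (by rw [hby]; decide)]
    rw [if_pos ⟨hxy, hby⟩] at F1
    omega
  · rw [eIdx, eIdx, if_neg (by rw [hbx]; decide), if_pos hby]
    rw [if_neg (fun h => absurd (hby ▸ h.2) (by decide))] at F1
    omega
  · rw [eIdx, eIdx, if_pos hbx, if_neg (by rw [hby]; decide)]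
    rw [if_pos ⟨hxy, hby⟩] at F1
    omega
  · rw [eIdx, eIdx, if_pos hbx, if_pos hby]
    rw [if_neg (fun h => absurd (hby ▸ h.2) (by decide))] at F1
    omega

lemma eIdx_lt_dtot (b : Conf L) (j : Fin (L+1)) (hbj : b j ≠ 1) :
    eIdx L b j < dtot L b := by
  classical
  have hjZ : j ∈ univ.filter (fun s : Fin (L+1) => b s ≠ 1) := by simp [hbj]
  have hcard : #((univ.filter (fun s : Fin (L+1) => b s ≠ 1)).erase j) = dtot L b - 1 := by
    rw [Finset.card_erase_of_mem hjZ, dtot]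
  have hpos : 1 ≤ dtot L b := dtot_pos b j hbj
  have hsubA : univ.filter (fun s : Fin (L+1) => (j:ℕ) < (s:ℕ) ∧ b s = 0)
      ⊆ (univ.filter (fun s : Fin (L+1) => b s ≠ 1)).erase j := by
    intro s hs
    simp only [mem_filter, mem_univ, true_and, Finset.mem_erase] at hs ⊢
    exact ⟨fun h => by rw [h] at hs; omega, by rw [hs.2]; decide⟩
  rcases show b j = 0 ∨ b j = 2 by omega with hbj0 | hbj2
  · rw [eIdx, if_neg (by rw [hbj0]; decide), add_zero]
    have := Finset.card_le_card hsubA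
    omega
  · rw [eIdx, if_pos hbj2]
    have hdisj : Disjoint (univ.filter (fun s : Fin (L+1) => (j:ℕ) < (s:ℕ) ∧ b s = 0))
        (univ.filter (fun s : Fin (L+1) => (s:ℕ) < (j:ℕ) ∧ b s ≠ 1)) := by
      rw [Finset.disjoint_left]
      intro s hs ht
      simp only [mem_filter, mem_univ, true_and] at hs ht
      omega
    have hsubB : (univ.filter (fun s : Fin (L+1) => (j:ℕ) < (s:ℕ) ∧ b s = 0))
        ∪ (univ.filter (fun s : Fin (L+1) => (s:ℕ) < (j:ℕ) ∧ b s ≠ 1))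
        ⊆ (univ.filter (fun s : Fin (L+1) => b s ≠ 1)).erase j := by
      intro s hs
      simp only [mem_filter, mem_univ, true_and, Finset.mem_union, Finset.mem_erase] at hs ⊢
      rcases hs with ⟨h1, h2⟩ | ⟨h1, h2⟩
      · exact ⟨fun h => by rw [h] at h1; omega, by rw [h2]; decide⟩
      · exact ⟨fun h => by rw [h] at h1; omega, h2⟩
    have := Finset.card_le_card hsubB
    rw [Finset.card_union_of_disjoint hdisj] at this
    omega

lemma eIdx_sum (b : Conf L) (f : ℕ → ℝ) :
    ∑ j ∈ univ.filter (fun s : Fin (L+1) => b s ≠ 1), f (eIdx L b j)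
      = ∑ i ∈ Finset.range (dtot L b), f i := by
  classical
  have hinj : ∀ x ∈ univ.filter (fun s : Fin (L+1) => b s ≠ 1),
      ∀ y ∈ univ.filter (fun s : Fin (L+1) => b s ≠ 1),
      eIdx L b x = eIdx L b y → x = y := by
    intro x hx y hy he
    simp only [mem_filter, mem_univ, true_and] at hx hy
    by_contra hne
    rcases show (x:ℕ) < (y:ℕ) ∨ (y:ℕ) < (x:ℕ) by
        rcases Nat.lt_trichotomy (x:ℕ) (y:ℕ) with h | h | h
        · exact Or.inl h
        · exact absurd (Fin.ext h) hne
        · exact Or.inr h with h | h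
    · exact eIdx_aux b x y hx hy h he
    · exact eIdx_aux b y x hy hx h he.symm
  have himg : (univ.filter (fun s : Fin (L+1) => b s ≠ 1)).image (eIdx L b)
      = Finset.range (dtot L b) := by
    apply Finset.eq_of_subset_of_card_le
    · intro i hi
      simp only [Finset.mem_image, mem_filter, mem_univ, true_and] at hi
      rcases hi with ⟨j, hj, rfl⟩
      rw [Finset.mem_range]
      exact eIdx_lt_dtot b j hj
    · rw [Finset.card_range, Finset.card_image_of_injOn (fun x hx y hy => hinj x hx y hy), dtot]
  rw [← himg, Finset.sum_image hinj]

end Bij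

lemma key_lemma {L : ℕ} {q Q : ℝ} (hq : q ≠ 0) (hQ : Q ≠ 0) (b : Conf L) (j : Fin (L+1))
    (hbj : b j ≠ 1) :
    coefS L q Q b j * Gfun L q Q (Function.update b j 1)
      = q ^ (-(2 * (eIdx L b j : ℤ))) * Gfun L q Q b := by
  classical
  by_cases hj0 : j = 0
  · -- j = 0
    subst hj0
    have hv0 : ((0 : Fin (L+1)) : ℕ) = 0 := rfl
    have hP' : univ.filter (fun x : Fin (L+1) => 0 < (x:ℕ) ∧ (Function.update b 0 1) x = 2)
        = univ.filter (fun x : Fin (L+1) => 0 < (x:ℕ) ∧ b x = 2) := by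
      rw [filter_update b 0 2 (by decide), Finset.erase_eq_of_notMem]
      simp
    have hM' : univ.filter (fun x : Fin (L+1) => 0 < (x:ℕ) ∧ (Function.update b 0 1) x = 0)
        = univ.filter (fun x : Fin (L+1) => 0 < (x:ℕ) ∧ b x = 0) := by
      rw [filter_update b 0 0 (by decide), Finset.erase_eq_of_notMem]
      simp
    have hNr : ∀ x : Fin (L+1), Nr1 L (Function.update b 0 1) x = Nr1 L b x := by
      intro x
      apply Nr1_update_eq
      rintro ⟨h1, -⟩
      rw [hv0] at h1
      omega
    have hd1' : d1 L (Function.update b 0 1) = d1 L b := by rw [d1, d1, hP']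
    have hz' : zeta0 L q Q (Function.update b 0 1) = 1 := by
      rw [zeta0, Function.update_self, if_neg (by decide), if_pos rfl]
    have hA' : (∏ x ∈ univ.filter (fun x : Fin (L+1) => 0 < (x:ℕ) ∧ b x = 2),
          Q * q ^ ((L:ℤ) + ((x:ℕ):ℤ) - (Nr1 L (Function.update b 0 1) x : ℤ)))
        = ∏ x ∈ univ.filter (fun x : Fin (L+1) => 0 < (x:ℕ) ∧ b x = 2),
          Q * q ^ ((L:ℤ) + ((x:ℕ):ℤ) - (Nr1 L b x : ℤ)) :=
      Finset.prod_congr rfl fun x _ => by rw [hNr]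
    have hC' : (∏ y ∈ univ.filter (fun y : Fin (L+1) => 0 < (y:ℕ) ∧ b y = 0),
          q ^ ((L:ℤ) - ((y:ℕ):ℤ) - (Nr1 L (Function.update b 0 1) y : ℤ)))
        = ∏ y ∈ univ.filter (fun y : Fin (L+1) => 0 < (y:ℕ) ∧ b y = 0),
          q ^ ((L:ℤ) - ((y:ℕ):ℤ) - (Nr1 L b y : ℤ)) :=
      Finset.prod_congr rfl fun y _ => by rw [hNr]
    have hcard0 : #(univ.filter fun s : Fin (L+1) => ((0:Fin (L+1)):ℕ) < (s:ℕ)) = L := by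
      rw [card_gt_val, hv0, Nat.sub_zero]
    have hsplit := card_split_val b (univ.filter fun s : Fin (L+1) => ((0:Fin (L+1)):ℕ) < (s:ℕ))
    rw [Finset.filter_filter, Finset.filter_filter, Finset.filter_filter] at hsplit
    have hd1n2 : d1 L b
        = #(univ.filter fun s : Fin (L+1) => ((0:Fin (L+1)):ℕ) < (s:ℕ) ∧ b s = 2) := by
      rw [d1]
      congr 1
    have hemp : univ.filter (fun s : Fin (L+1) => (s:ℕ) < ((0:Fin (L+1)):ℕ)) = ∅ := by
      ext s
      simp only [mem_filter, mem_univ, true_and, Finset.notMem_empty, iff_false, hv0]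
      omega
    rw [Gfun, Gfun, hP', hM', hA', hC', hz']
    rcases show b 0 = 0 ∨ b 0 = 2 by omega with hb0 | hb0
    · -- case B : b 0 = 0
      rw [coefS, if_pos hb0, prod_wKv hq, Finset.filter_filter, Finset.filter_filter,
        zeta0, if_neg (by rw [hb0]; decide), if_neg (by rw [hb0]; decide)]
      have he : eIdx L b 0 = #(univ.filter fun s : Fin (L+1) =>
          ((0:Fin (L+1)):ℕ) < (s:ℕ) ∧ b s = 0) := by
        rw [eIdx, if_neg (by rw [hb0]; decide), add_zero]
      rw [he]
      have hqq : (q:ℝ) ^ ((#(univ.filter fun s : Fin (L+1) =>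
              ((0:Fin (L+1)):ℕ) < (s:ℕ) ∧ b s = 1) : ℤ)
            - (#(univ.filter fun s : Fin (L+1) => ((0:Fin (L+1)):ℕ) < (s:ℕ) ∧ b s = 0) : ℤ))
          = q ^ (-(2 * (#(univ.filter fun s : Fin (L+1) =>
              ((0:Fin (L+1)):ℕ) < (s:ℕ) ∧ b s = 0) : ℤ)))
            * q ^ ((L:ℤ) - (d1 L b : ℤ)) := by
        rw [← zpow_add₀ hq]
        congr 1
        omega
      rw [hqq]
      ring
    · -- case D : b 0 = 2
      rw [coefS, if_neg (by rw [hb0]; decide), if_pos hb0, hemp, Finset.prod_empty, one_mul,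
        prod_wKv hq, Finset.filter_filter, Finset.filter_filter,
        zeta0, if_pos hb0]
      have he : eIdx L b 0 = #(univ.filter fun s : Fin (L+1) =>
          ((0:Fin (L+1)):ℕ) < (s:ℕ) ∧ b s = 0) := by
        rw [eIdx, if_pos hb0]
        have : univ.filter (fun s : Fin (L+1) => (s:ℕ) < ((0:Fin (L+1)):ℕ) ∧ b s ≠ 1) = ∅ := by
          ext s
          simp only [mem_filter, mem_univ, true_and, Finset.notMem_empty, iff_false, hv0]
          omega
        rw [this, Finset.card_empty, add_zero]
      rw [he]
      have hqq : (q:ℝ) ^ ((#(univ.filter fun s : Fin (L+1) =>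
              ((0:Fin (L+1)):ℕ) < (s:ℕ) ∧ b s = 1) : ℤ)
            - (#(univ.filter fun s : Fin (L+1) => ((0:Fin (L+1)):ℕ) < (s:ℕ) ∧ b s = 0) : ℤ))
          = q ^ (-(2 * (#(univ.filter fun s : Fin (L+1) =>
              ((0:Fin (L+1)):ℕ) < (s:ℕ) ∧ b s = 0) : ℤ)))
            * q ^ ((L:ℤ) - (d1 L b : ℤ)) := by
        rw [← zpow_add₀ hq]
        congr 1
        omega
      rw [hqq]
      ring
  · -- j ≠ 0
    have hjpos : 0 < (j:ℕ) :=
      Nat.pos_of_ne_zero (fun h => hj0 (Fin.ext (by rw [h]; rfl)))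
    have hb'0 : Function.update b j 1 0 = b 0 := Function.update_of_ne (Ne.symm hj0) _ _
    rcases show b j = 0 ∨ b j = 2 by omega with hbj0 | hbj2
    · -- case A : b j = 0, j ≠ 0
      have hP' : univ.filter (fun x : Fin (L+1) => 0 < (x:ℕ) ∧ (Function.update b j 1) x = 2)
          = univ.filter (fun x : Fin (L+1) => 0 < (x:ℕ) ∧ b x = 2) := by
        rw [filter_update b j 2 (by decide), Finset.erase_eq_of_notMem]
        simp [hbj0]
      have hM' : univ.filter (fun x : Fin (L+1) => 0 < (x:ℕ) ∧ (Function.update b j 1) x = 0)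
          = (univ.filter (fun x : Fin (L+1) => 0 < (x:ℕ) ∧ b x = 0)).erase j :=
        filter_update b j 0 (by decide)
      have hNr : ∀ x : Fin (L+1), Nr1 L (Function.update b j 1) x = Nr1 L b x := by
        intro x
        apply Nr1_update_eq
        rintro ⟨-, h⟩
        rw [hbj0] at h
        exact absurd h (by decide)
      have hd1' : d1 L (Function.update b j 1) = d1 L b := by rw [d1, d1, hP']
      have hz' : zeta0 L q Q (Function.update b j 1) = zeta0 L q Q b := by
        rw [zeta0, zeta0, hb'0, hd1']
      have hjM : j ∈ univ.filter (fun x : Fin (L+1) => 0 < (x:ℕ) ∧ b x = 0) := by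
        simp only [mem_filter, mem_univ, true_and]; exact ⟨hjpos, hbj0⟩
      have hA' : (∏ x ∈ univ.filter (fun x : Fin (L+1) => 0 < (x:ℕ) ∧ b x = 2),
            Q * q ^ ((L:ℤ) + ((x:ℕ):ℤ) - (Nr1 L (Function.update b j 1) x : ℤ)))
          = ∏ x ∈ univ.filter (fun x : Fin (L+1) => 0 < (x:ℕ) ∧ b x = 2),
            Q * q ^ ((L:ℤ) + ((x:ℕ):ℤ) - (Nr1 L b x : ℤ)) :=
        Finset.prod_congr rfl fun x _ => by rw [hNr]
      have hC' : (∏ y ∈ (univ.filter (fun y : Fin (L+1) => 0 < (y:ℕ) ∧ b y = 0)).erase j,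
            q ^ ((L:ℤ) - ((y:ℕ):ℤ) - (Nr1 L (Function.update b j 1) y : ℤ)))
          = ∏ y ∈ (univ.filter (fun y : Fin (L+1) => 0 < (y:ℕ) ∧ b y = 0)).erase j,
            q ^ ((L:ℤ) - ((y:ℕ):ℤ) - (Nr1 L b y : ℤ)) :=
        Finset.prod_congr rfl fun y _ => by rw [hNr]
      rw [Gfun, Gfun, hP', hM', hA', hC', hz',
        ← Finset.mul_prod_erase _ _ hjM]
      rw [coefS, if_pos hbj0, prod_wKv hq, Finset.filter_filter, Finset.filter_filter]
      have he : eIdx L b j = #(univ.filter fun s : Fin (L+1) =>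
          (j:ℕ) < (s:ℕ) ∧ b s = 0) := by
        rw [eIdx, if_neg (by rw [hbj0]; decide), add_zero]
      rw [he]
      have hsplit := card_split_val b (univ.filter fun s : Fin (L+1) => (j:ℕ) < (s:ℕ))
      rw [Finset.filter_filter, Finset.filter_filter, Finset.filter_filter] at hsplit
      have hcard : #(univ.filter fun s : Fin (L+1) => (j:ℕ) < (s:ℕ)) = L - (j:ℕ) :=
        card_gt_val j
      have hjle : (j:ℕ) ≤ L := by omega
      have hNrj := Nr1_eq_val b j
      have hqq : (q:ℝ) ^ ((#(univ.filter fun s : Fin (L+1) => (j:ℕ) < (s:ℕ) ∧ b s = 1) : ℤ)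
            - (#(univ.filter fun s : Fin (L+1) => (j:ℕ) < (s:ℕ) ∧ b s = 0) : ℤ))
          = q ^ (-(2 * (#(univ.filter fun s : Fin (L+1) => (j:ℕ) < (s:ℕ) ∧ b s = 0) : ℤ)))
            * q ^ ((L:ℤ) - ((j:ℕ):ℤ) - (Nr1 L b j : ℤ)) := by
        rw [← zpow_add₀ hq]
        congr 1
        omega
      rw [hqq]
      ring
    · -- case C : b j = 2, j ≠ 0
      have hjP : j ∈ univ.filter (fun x : Fin (L+1) => 0 < (x:ℕ) ∧ b x = 2) := by
        simp only [mem_filter, mem_univ, true_and]; exact ⟨hjpos, hbj2⟩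
      have hP'' : univ.filter (fun x : Fin (L+1) => 0 < (x:ℕ) ∧ (Function.update b j 1) x = 2)
          = (univ.filter (fun x : Fin (L+1) => 0 < (x:ℕ) ∧ b x = 2)).erase j :=
        filter_update b j 2 (by decide)
      have hM'' : univ.filter (fun x : Fin (L+1) => 0 < (x:ℕ) ∧ (Function.update b j 1) x = 0)
          = univ.filter (fun x : Fin (L+1) => 0 < (x:ℕ) ∧ b x = 0) := by
        rw [filter_update b j 0 (by decide), Finset.erase_eq_of_notMem]
        simp [hbj2]
      have hd1pos : 1 ≤ d1 L b := by
        rw [d1]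
        exact Finset.card_pos.mpr ⟨j, hjP⟩
      have hd1'' : d1 L (Function.update b j 1) = d1 L b - 1 := by
        rw [d1, d1, hP'', Finset.card_erase_of_mem hjP]
      have hc1set : ((univ.filter (fun x : Fin (L+1) => 0 < (x:ℕ) ∧ b x = 2)).erase j).filter
            (fun x : Fin (L+1) => (x:ℕ) < (j:ℕ))
          = univ.filter (fun x : Fin (L+1) => (0 < (x:ℕ) ∧ b x = 2) ∧ (x:ℕ) < (j:ℕ)) := by
        ext x
        simp only [Finset.mem_filter, Finset.mem_erase, mem_univ, true_and]
        constructor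
        · rintro ⟨⟨hxj, hx⟩, hlt⟩
          exact ⟨hx, hlt⟩
        · rintro ⟨hx, hlt⟩
          exact ⟨⟨fun h => by rw [h] at hlt; omega, hx⟩, hlt⟩
      have hA' : (∏ x ∈ (univ.filter (fun x : Fin (L+1) => 0 < (x:ℕ) ∧ b x = 2)).erase j,
            Q * q ^ ((L:ℤ) + ((x:ℕ):ℤ) - (Nr1 L (Function.update b j 1) x : ℤ)))
          = (∏ x ∈ (univ.filter (fun x : Fin (L+1) => 0 < (x:ℕ) ∧ b x = 2)).erase j,
              Q * q ^ ((L:ℤ) + ((x:ℕ):ℤ) - (Nr1 L b x : ℤ)))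
            * q ^ ((#(univ.filter (fun x : Fin (L+1) =>
                (0 < (x:ℕ) ∧ b x = 2) ∧ (x:ℕ) < (j:ℕ))) : ℤ)) := by
        have step : ∀ x ∈ (univ.filter (fun x : Fin (L+1) => 0 < (x:ℕ) ∧ b x = 2)).erase j,
            Q * q ^ ((L:ℤ) + ((x:ℕ):ℤ) - (Nr1 L (Function.update b j 1) x : ℤ))
              = (Q * q ^ ((L:ℤ) + ((x:ℕ):ℤ) - (Nr1 L b x : ℤ)))
                * q ^ (if (x:ℕ) < (j:ℕ) then (1:ℤ) else 0) := by
          intro x hx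
          by_cases hlt : (x:ℕ) < (j:ℕ)
          · have h := Nr1_update_lt b j x hlt hbj2
            rw [if_pos hlt,
              show (L:ℤ) + ((x:ℕ):ℤ) - (Nr1 L (Function.update b j 1) x : ℤ)
                = ((L:ℤ) + ((x:ℕ):ℤ) - (Nr1 L b x : ℤ)) + 1 from by omega,
              zpow_add₀ hq, zpow_one]
            ring
          · rw [Nr1_update_eq b j x (fun hc => hlt hc.1), if_neg hlt, zpow_zero, mul_one]
        rw [Finset.prod_congr rfl step, Finset.prod_mul_distrib, prod_zpow_sum hq,
          Finset.sum_boole, hc1set]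
      have hc2set : (univ.filter (fun y : Fin (L+1) => 0 < (y:ℕ) ∧ b y = 0)).filter
            (fun y : Fin (L+1) => (y:ℕ) < (j:ℕ))
          = univ.filter (fun y : Fin (L+1) => (0 < (y:ℕ) ∧ b y = 0) ∧ (y:ℕ) < (j:ℕ)) :=
        Finset.filter_filter _ _ _
      have hC' : (∏ y ∈ univ.filter (fun y : Fin (L+1) => 0 < (y:ℕ) ∧ b y = 0),
            q ^ ((L:ℤ) - ((y:ℕ):ℤ) - (Nr1 L (Function.update b j 1) y : ℤ)))
          = (∏ y ∈ univ.filter (fun y : Fin (L+1) => 0 < (y:ℕ) ∧ b y = 0),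
              q ^ ((L:ℤ) - ((y:ℕ):ℤ) - (Nr1 L b y : ℤ)))
            * q ^ ((#(univ.filter (fun y : Fin (L+1) =>
                (0 < (y:ℕ) ∧ b y = 0) ∧ (y:ℕ) < (j:ℕ))) : ℤ)) := by
        have step : ∀ y ∈ univ.filter (fun y : Fin (L+1) => 0 < (y:ℕ) ∧ b y = 0),
            q ^ ((L:ℤ) - ((y:ℕ):ℤ) - (Nr1 L (Function.update b j 1) y : ℤ))
              = (q ^ ((L:ℤ) - ((y:ℕ):ℤ) - (Nr1 L b y : ℤ)))
                * q ^ (if (y:ℕ) < (j:ℕ) then (1:ℤ) else 0) := by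
          intro y hy
          by_cases hlt : (y:ℕ) < (j:ℕ)
          · have h := Nr1_update_lt b j y hlt hbj2
            rw [if_pos hlt,
              show (L:ℤ) - ((y:ℕ):ℤ) - (Nr1 L (Function.update b j 1) y : ℤ)
                = ((L:ℤ) - ((y:ℕ):ℤ) - (Nr1 L b y : ℤ)) + 1 from by omega,
              zpow_add₀ hq, zpow_one]
          · rw [Nr1_update_eq b j y (fun hc => hlt hc.1), if_neg hlt, zpow_zero, mul_one]
        rw [Finset.prod_congr rfl step, Finset.prod_mul_distrib]
        congr 1
        rw [prod_zpow_sum hq _ (fun y : Fin (L+1) => if (y:ℕ) < (j:ℕ) then (1:ℤ) else 0),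
          Finset.sum_boole, hc2set]
      have hc1 := card_filter_zero_split b j 2
      have hc2 := card_filter_zero_split b j 0
      have hsplitgt := card_split_val b (univ.filter fun s : Fin (L+1) => (j:ℕ) < (s:ℕ))
      rw [Finset.filter_filter, Finset.filter_filter, Finset.filter_filter] at hsplitgt
      have hsplitlt := card_split_val b (univ.filter fun s : Fin (L+1) => (s:ℕ) < (j:ℕ))
      rw [Finset.filter_filter, Finset.filter_filter, Finset.filter_filter] at hsplitlt
      have hcardgt : #(univ.filter fun s : Fin (L+1) => (j:ℕ) < (s:ℕ)) = L - (j:ℕ) :=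
        card_gt_val j
      have hcardlt : #(univ.filter fun s : Fin (L+1) => (s:ℕ) < (j:ℕ)) = (j:ℕ) :=
        card_lt_val j
      have hjle : (j:ℕ) ≤ L := by omega
      have hNrj := Nr1_eq_val b j
      have hmsplit := card_split_val b (univ.filter fun s : Fin (L+1) => (s:ℕ) < (j:ℕ) ∧ b s ≠ 1)
      rw [Finset.filter_filter, Finset.filter_filter, Finset.filter_filter] at hmsplit
      have hm0 : univ.filter (fun s : Fin (L+1) => ((s:ℕ) < (j:ℕ) ∧ b s ≠ 1) ∧ b s = 0)
          = univ.filter (fun s : Fin (L+1) => (s:ℕ) < (j:ℕ) ∧ b s = 0) := by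
        ext s
        simp only [mem_filter, mem_univ, true_and]
        constructor
        · rintro ⟨⟨h1, h2⟩, h3⟩
          exact ⟨h1, h3⟩
        · rintro ⟨h1, h3⟩
          exact ⟨⟨h1, by rw [h3]; decide⟩, h3⟩
      have hm1 : univ.filter (fun s : Fin (L+1) => ((s:ℕ) < (j:ℕ) ∧ b s ≠ 1) ∧ b s = 1)
          = ∅ := by
        ext s
        simp only [mem_filter, mem_univ, true_and, Finset.notMem_empty, iff_false]
        rintro ⟨⟨h1, h2⟩, h3⟩
        exact h2 h3
      have hm2 : univ.filter (fun s : Fin (L+1) => ((s:ℕ) < (j:ℕ) ∧ b s ≠ 1) ∧ b s = 2)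
          = univ.filter (fun s : Fin (L+1) => (s:ℕ) < (j:ℕ) ∧ b s = 2) := by
        ext s
        simp only [mem_filter, mem_univ, true_and]
        constructor
        · rintro ⟨⟨h1, h2⟩, h3⟩
          exact ⟨h1, h3⟩
        · rintro ⟨h1, h3⟩
          exact ⟨⟨h1, by rw [h3]; decide⟩, h3⟩
      rw [hm0, hm1, hm2, Finset.card_empty] at hmsplit
      rw [Gfun, Gfun, hP'', hM'', hA', hC',
        ← Finset.mul_prod_erase _ _ hjP]
      rw [coefS, if_neg (by rw [hbj2]; decide), if_pos hbj2, prod_wkv hq, prod_wKv hq]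
      simp only [Finset.filter_filter]
      rw [eIdx, if_pos hbj2]
      rcases show b 0 = 0 ∨ b 0 = 1 ∨ b 0 = 2 by omega with hb0 | hb0 | hb0
      · -- b 0 = 0
        rw [if_neg (fun h : b 0 = 2 ∧ 0 < (j:ℕ) => absurd (hb0 ▸ h.1) (by decide))] at hc1
        rw [if_pos ⟨hb0, hjpos⟩] at hc2
        have hz' : zeta0 L q Q (Function.update b j 1) = zeta0 L q Q b * q ^ ((1:ℤ)) := by
          rw [zeta0, zeta0, hb'0, hd1'', if_neg (by rw [hb0]; decide), if_neg (by rw [hb0]; decide),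
            if_neg (by rw [hb0]; decide), if_neg (by rw [hb0]; decide), ← zpow_add₀ hq]
          congr 1
          omega
        rw [hz']
        have hqq : (q:ℝ) ^ (2 * (#(univ.filter fun s : Fin (L+1) => (s:ℕ) < (j:ℕ) ∧ b s = 1) : ℤ) - (#(univ.filter fun s : Fin (L+1) => (s:ℕ) < (j:ℕ) ∧ b s = 0) : ℤ) - (#(univ.filter fun s : Fin (L+1) => (s:ℕ) < (j:ℕ) ∧ b s = 2) : ℤ))
              * q ^ ((#(univ.filter fun s : Fin (L+1) => (j:ℕ) < (s:ℕ) ∧ b s = 1) : ℤ) - (#(univ.filter fun s : Fin (L+1) => (j:ℕ) < (s:ℕ) ∧ b s = 0) : ℤ)) * q ^ (#(univ.filter fun x : Fin (L+1) => (0 < (x:ℕ) ∧ b x = 2) ∧ (x:ℕ) < (j:ℕ)) : ℤ) * q ^ ((1:ℤ)) * q ^ (#(univ.filter fun y : Fin (L+1) => (0 < (y:ℕ) ∧ b y = 0) ∧ (y:ℕ) < (j:ℕ)) : ℤ)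
            = q ^ (-(2 * (((#(univ.filter fun s : Fin (L+1) => (j:ℕ) < (s:ℕ) ∧ b s = 0) + #(univ.filter fun s : Fin (L+1) => (s:ℕ) < (j:ℕ) ∧ b s ≠ 1) : ℕ)) : ℤ)))
              * q ^ ((L:ℤ) + ((j:ℕ):ℤ) - (Nr1 L b j : ℤ)) := by
          rw [← zpow_add₀ hq, ← zpow_add₀ hq, ← zpow_add₀ hq, ← zpow_add₀ hq, ← zpow_add₀ hq]
          congr 1
          omega
        linear_combination (Q * (∏ x ∈ (univ.filter (fun x : Fin (L+1) => 0 < (x:ℕ) ∧ b x = 2)).erase j, Q * q ^ ((L:ℤ) + ((x:ℕ):ℤ) - (Nr1 L b x : ℤ))) * zeta0 L q Q b * (∏ y ∈ univ.filter (fun y : Fin (L+1) => 0 < (y:ℕ) ∧ b y = 0), q ^ ((L:ℤ) - ((y:ℕ):ℤ) - (Nr1 L b y : ℤ)))) * hqq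
      · -- b 0 = 1
        rw [if_neg (fun h : b 0 = 2 ∧ 0 < (j:ℕ) => absurd (hb0 ▸ h.1) (by decide))] at hc1
        rw [if_neg (fun h : b 0 = 0 ∧ 0 < (j:ℕ) => absurd (hb0 ▸ h.1) (by decide))] at hc2
        have hz' : zeta0 L q Q (Function.update b j 1) = zeta0 L q Q b := by
          rw [zeta0, zeta0, hb'0, if_neg (by rw [hb0]; decide), if_pos hb0,
            if_neg (by rw [hb0]; decide), if_pos hb0]
        rw [hz']
        have hqq : (q:ℝ) ^ (2 * (#(univ.filter fun s : Fin (L+1) => (s:ℕ) < (j:ℕ) ∧ b s = 1) : ℤ) - (#(univ.filter fun s : Fin (L+1) => (s:ℕ) < (j:ℕ) ∧ b s = 0) : ℤ) - (#(univ.filter fun s : Fin (L+1) => (s:ℕ) < (j:ℕ) ∧ b s = 2) : ℤ))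
              * q ^ ((#(univ.filter fun s : Fin (L+1) => (j:ℕ) < (s:ℕ) ∧ b s = 1) : ℤ) - (#(univ.filter fun s : Fin (L+1) => (j:ℕ) < (s:ℕ) ∧ b s = 0) : ℤ)) * q ^ (#(univ.filter fun x : Fin (L+1) => (0 < (x:ℕ) ∧ b x = 2) ∧ (x:ℕ) < (j:ℕ)) : ℤ) * q ^ (#(univ.filter fun y : Fin (L+1) => (0 < (y:ℕ) ∧ b y = 0) ∧ (y:ℕ) < (j:ℕ)) : ℤ)
            = q ^ (-(2 * (((#(univ.filter fun s : Fin (L+1) => (j:ℕ) < (s:ℕ) ∧ b s = 0) + #(univ.filter fun s : Fin (L+1) => (s:ℕ) < (j:ℕ) ∧ b s ≠ 1) : ℕ)) : ℤ)))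
              * q ^ ((L:ℤ) + ((j:ℕ):ℤ) - (Nr1 L b j : ℤ)) := by
          rw [← zpow_add₀ hq, ← zpow_add₀ hq, ← zpow_add₀ hq, ← zpow_add₀ hq]
          congr 1
          omega
        linear_combination (Q * (∏ x ∈ (univ.filter (fun x : Fin (L+1) => 0 < (x:ℕ) ∧ b x = 2)).erase j, Q * q ^ ((L:ℤ) + ((x:ℕ):ℤ) - (Nr1 L b x : ℤ))) * zeta0 L q Q b * (∏ y ∈ univ.filter (fun y : Fin (L+1) => 0 < (y:ℕ) ∧ b y = 0), q ^ ((L:ℤ) - ((y:ℕ):ℤ) - (Nr1 L b y : ℤ)))) * hqq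
      · -- b 0 = 2
        rw [if_pos ⟨hb0, hjpos⟩] at hc1
        rw [if_neg (fun h : b 0 = 0 ∧ 0 < (j:ℕ) => absurd (hb0 ▸ h.1) (by decide))] at hc2
        have hz' : zeta0 L q Q (Function.update b j 1) = zeta0 L q Q b * q ^ ((1:ℤ)) := by
          rw [zeta0, zeta0, hb'0, hd1'', if_pos hb0, if_pos hb0,
            show (L:ℤ) - ((d1 L b - 1 : ℕ) : ℤ) = ((L:ℤ) - (d1 L b : ℤ)) + 1 from by omega,
            zpow_add₀ hq, zpow_one]
          ring
        rw [hz']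
        have hqq : (q:ℝ) ^ (2 * (#(univ.filter fun s : Fin (L+1) => (s:ℕ) < (j:ℕ) ∧ b s = 1) : ℤ) - (#(univ.filter fun s : Fin (L+1) => (s:ℕ) < (j:ℕ) ∧ b s = 0) : ℤ) - (#(univ.filter fun s : Fin (L+1) => (s:ℕ) < (j:ℕ) ∧ b s = 2) : ℤ))
              * q ^ ((#(univ.filter fun s : Fin (L+1) => (j:ℕ) < (s:ℕ) ∧ b s = 1) : ℤ) - (#(univ.filter fun s : Fin (L+1) => (j:ℕ) < (s:ℕ) ∧ b s = 0) : ℤ)) * q ^ (#(univ.filter fun x : Fin (L+1) => (0 < (x:ℕ) ∧ b x = 2) ∧ (x:ℕ) < (j:ℕ)) : ℤ) * q ^ ((1:ℤ)) * q ^ (#(univ.filter fun y : Fin (L+1) => (0 < (y:ℕ) ∧ b y = 0) ∧ (y:ℕ) < (j:ℕ)) : ℤ)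
            = q ^ (-(2 * (((#(univ.filter fun s : Fin (L+1) => (j:ℕ) < (s:ℕ) ∧ b s = 0) + #(univ.filter fun s : Fin (L+1) => (s:ℕ) < (j:ℕ) ∧ b s ≠ 1) : ℕ)) : ℤ)))
              * q ^ ((L:ℤ) + ((j:ℕ):ℤ) - (Nr1 L b j : ℤ)) := by
          rw [← zpow_add₀ hq, ← zpow_add₀ hq, ← zpow_add₀ hq, ← zpow_add₀ hq, ← zpow_add₀ hq]
          congr 1
          omega
        linear_combination (Q * (∏ x ∈ (univ.filter (fun x : Fin (L+1) => 0 < (x:ℕ) ∧ b x = 2)).erase j, Q * q ^ ((L:ℤ) + ((x:ℕ):ℤ) - (Nr1 L b x : ℤ))) * zeta0 L q Q b * (∏ y ∈ univ.filter (fun y : Fin (L+1) => 0 < (y:ℕ) ∧ b y = 0), q ^ ((L:ℤ) - ((y:ℕ):ℤ) - (Nr1 L b y : ℤ)))) * hqq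


lemma geom_qInt {q : ℝ} (hq : q ≠ 0) (hq2 : q ^ 2 ≠ 1) (n : ℕ) :
    ∑ i ∈ Finset.range n, (q:ℝ) ^ (-(2 * (i:ℤ))) = q ^ ((2:ℤ) - 2 * n) * qInt q n := by
  have hterm : ∀ i : ℕ, (q:ℝ) ^ (-(2 * (i:ℤ))) = ((q ^ 2)⁻¹) ^ i := by
    intro i
    rw [_root_.zpow_neg, inv_pow]
    congr 1
    rw [show (2 * (i:ℤ)) = ((2 * i : ℕ) : ℤ) from by push_cast; ring, zpow_natCast, pow_mul]
  have hx1 : ((q:ℝ) ^ 2)⁻¹ ≠ 1 := by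
    intro h
    apply hq2
    rw [← inv_inv ((q:ℝ)^2), h, inv_one]
  rw [Finset.sum_congr rfl (fun i _ => hterm i), geom_sum_eq hx1, qInt]
  have hq2n : (q:ℝ) ^ (2 * n) ≠ 0 := pow_ne_zero _ hq
  have hq2' : (1:ℝ) - q ^ 2 ≠ 0 := fun h => hq2 (by linarith [sub_eq_zero.mp h])
  have e1 : (q:ℝ) ^ ((2:ℤ)) = q ^ (2:ℕ) := by
    rw [show ((2:ℤ)) = ((2:ℕ) : ℤ) from rfl, zpow_natCast]
  have e2 : (q:ℝ) ^ ((2:ℤ) * n) = q ^ (2 * n : ℕ) := by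
    rw [show ((2:ℤ) * n) = ((2 * n : ℕ) : ℤ) from by push_cast; ring, zpow_natCast]
  have hzpow : (q:ℝ) ^ ((2:ℤ) - 2 * n) = q ^ 2 / q ^ (2 * n) := by
    rw [zpow_sub₀ hq, e1, e2]
  rw [hzpow]
  have h1 : ((q:ℝ)^2)⁻¹ ^ n = (q ^ (2*n))⁻¹ := by rw [inv_pow, pow_mul]
  rw [h1]
  have hden : ((q:ℝ)^2)⁻¹ - 1 ≠ 0 := sub_ne_zero.mpr hx1
  field_simp

def vfun (L : ℕ) (q Q : ℝ) (d : ℕ) : Conf L → ℝ := fun b =>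
  if dtot L b = d then
    q ^ (-((d : ℤ) * ((d : ℤ) - 1))) * qFact q d * Gfun L q Q b
  else 0

lemma step_lemma {L : ℕ} {q Q : ℝ} (hq : q ≠ 0) (hq2 : q ^ 2 ≠ 1) (hQ : Q ≠ 0) (d : ℕ) :
    Ftot L q Q *ᵥ vfun L q Q d = vfun L q Q (d + 1) := by
  classical
  funext b
  rw [Ftot_mulVec hq]
  by_cases hd : dtot L b = d + 1
  · -- main case
    have hsum0 : ∀ x ∈ (univ : Finset (Fin (L+1))),
        coefS L q Q b x * vfun L q Q d (Function.update b x 1) ≠ 0 → b x ≠ 1 := by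
      intro x _ hne hbx
      apply hne
      rw [coefS, if_neg (by rw [hbx]; decide), if_neg (by rw [hbx]; decide), zero_mul]
    rw [← Finset.sum_filter_of_ne hsum0]
    have hterm : ∀ j ∈ univ.filter (fun s : Fin (L+1) => b s ≠ 1),
        coefS L q Q b j * vfun L q Q d (Function.update b j 1)
          = (q ^ (-((d : ℤ) * ((d : ℤ) - 1))) * qFact q d * Gfun L q Q b)
            * q ^ (-(2 * (eIdx L b j : ℤ))) := by
      intro j hj
      simp only [mem_filter, mem_univ, true_and] at hj
      have hdu : dtot L (Function.update b j 1) = d := by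
        rw [dtot_update b j hj, hd]
        omega
      have hv : vfun L q Q d (Function.update b j 1)
          = q ^ (-((d : ℤ) * ((d : ℤ) - 1))) * qFact q d
            * Gfun L q Q (Function.update b j 1) := by
        simp only [vfun]
        rw [if_pos hdu]
      rw [hv]
      calc coefS L q Q b j * (q ^ (-((d : ℤ) * ((d : ℤ) - 1))) * qFact q d
              * Gfun L q Q (Function.update b j 1))
          = (q ^ (-((d : ℤ) * ((d : ℤ) - 1))) * qFact q d)
              * (coefS L q Q b j * Gfun L q Q (Function.update b j 1)) := by ring
        _ = (q ^ (-((d : ℤ) * ((d : ℤ) - 1))) * qFact q d)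
              * (q ^ (-(2 * (eIdx L b j : ℤ))) * Gfun L q Q b) := by
            rw [key_lemma hq hQ b j hj]
        _ = (q ^ (-((d : ℤ) * ((d : ℤ) - 1))) * qFact q d * Gfun L q Q b)
              * q ^ (-(2 * (eIdx L b j : ℤ))) := by ring
    rw [Finset.sum_congr rfl hterm, ← Finset.mul_sum, eIdx_sum b
      (fun i => (q:ℝ) ^ (-(2 * (i:ℤ)))), hd, geom_qInt hq hq2, vfun]
    rw [if_pos hd]
    have hfact : qFact q (d+1) = qFact q d * qInt q (d+1) := rfl
    rw [hfact]
    have hexp : (q:ℝ) ^ (-((d:ℤ) * ((d:ℤ) - 1))) * q ^ ((2:ℤ) - 2 * ((d+1 : ℕ) : ℤ))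
        = q ^ (-(((d+1:ℕ):ℤ) * (((d+1:ℕ):ℤ) - 1))) := by
      rw [← zpow_add₀ hq]
      congr 1
      push_cast
      ring
    calc (q:ℝ) ^ (-((d:ℤ) * ((d:ℤ) - 1))) * qFact q d * Gfun L q Q b
          * (q ^ ((2:ℤ) - 2 * ((d+1:ℕ):ℤ)) * qInt q (d+1))
        = (q:ℝ) ^ (-((d:ℤ) * ((d:ℤ) - 1))) * q ^ ((2:ℤ) - 2 * ((d+1 : ℕ) : ℤ))
            * (qFact q d * qInt q (d+1)) * Gfun L q Q b := by ring
      _ = q ^ (-(((d+1:ℕ):ℤ) * (((d+1:ℕ):ℤ) - 1))) * (qFact q d * qInt q (d+1))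
            * Gfun L q Q b := by rw [hexp]
  · -- off case
    have hrhs : vfun L q Q (d+1) b = 0 := by
      simp only [vfun]
      rw [if_neg hd]
    rw [hrhs]
    apply Finset.sum_eq_zero
    intro j _
    by_cases hbj : b j = 1
    · rw [coefS, if_neg (by rw [hbj]; decide), if_neg (by rw [hbj]; decide), zero_mul]
    · have hdu : dtot L (Function.update b j 1) ≠ d := by
        have h1 := dtot_update b j hbj
        have h2 := dtot_pos b j hbj
        omega
      have hv : vfun L q Q d (Function.update b j 1) = 0 := by
        simp only [vfun]
        rw [if_neg hdu]
      rw [hv, mul_zero]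

lemma vfun_zero {L : ℕ} (q Q : ℝ) : Omega L = vfun L q Q 0 := by
  classical
  funext b
  rw [Omega, vfun]
  by_cases hb : b = fun _ => 1
  · subst hb
    have hdt : dtot L (fun _ : Fin (L+1) => (1 : Fin 3)) = 0 := by
      rw [dtot]
      simp
    rw [if_pos rfl, hdt, if_pos rfl]
    have hP : univ.filter (fun x : Fin (L+1) =>
        0 < (x:ℕ) ∧ (fun _ : Fin (L+1) => (1:Fin 3)) x = 2) = ∅ := by
      ext x; simp
    have hM : univ.filter (fun y : Fin (L+1) =>
        0 < (y:ℕ) ∧ (fun _ : Fin (L+1) => (1:Fin 3)) y = 0) = ∅ := by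
      ext x; simp
    rw [Gfun, hP, hM, Finset.prod_empty, Finset.prod_empty, zeta0, if_neg (by decide)]
    norm_num [qFact]
  · rw [if_neg hb]
    have hdt : dtot L b ≠ 0 := by
      rw [dtot]
      rcases Function.ne_iff.mp hb with ⟨s, hs⟩
      intro h
      rw [Finset.card_eq_zero] at h
      have : s ∈ univ.filter (fun s : Fin (L+1) => b s ≠ 1) := by simp [hs]
      rw [h] at this
      exact absurd this (Finset.notMem_empty s)
    rw [if_neg hdt]



/-- **Coefficients of `F_tot^d Ω`** (Proposition in the proof of Theorem 1.3):
the coefficient of the tensor basis vector `c_b` in `F_tot^d Ω` is `0` unless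
`d(b) = d`, in which case it equals `q^{−d(d−1)} [d]_{q²}! G(b)`. -/
theorem Ftot_pow_coefficients (L : ℕ) (hL : 1 ≤ L)
    (q Q : ℝ) (hq0 : 0 < q) (hq1 : q < 1) (hQ0 : 0 < Q) (hQ1 : Q < 1)
    (d : ℕ) (b : Conf L) :
    ((Ftot L q Q) ^ d *ᵥ Omega L) b =
      if dtot L b = d then
        q ^ (-((d : ℤ) * ((d : ℤ) - 1))) * qFact q d * Gfun L q Q b
      else 0 := by
  have hq : q ≠ 0 := ne_of_gt hq0
  have hq2 : q ^ 2 ≠ 1 := by nlinarith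
  have hQ : Q ≠ 0 := ne_of_gt hQ0
  have key : ∀ d, (Ftot L q Q) ^ d *ᵥ Omega L = vfun L q Q d := by
    intro d
    induction d with
    | zero => rw [pow_zero, Matrix.one_mulVec, vfun_zero q Q]
    | succ n ih =>
      rw [pow_succ', ← Matrix.mulVec_mulVec, ih, step_lemma hq hq2 hQ]
  rw [key d]
  rfl


end Stmt7

end
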